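/- Let t > 0 and a, b ∈ ℕ with s = a + b, and define the vector field F_t : ℝ² → ℝ² by F_t(x₁, x₂) = e^{−x₁/t} (cos(x₂/t), sin(x₂/t)). Then the sum over the two components i = 1, 2 of ∫_{(0,1)²} |∂₁^a ∂₂^b (F_t)_i(x)|² dx equals t^{−2s} · (t/2)(1 − e^{−2/t}). -/

import Mathlib

noncomputable section

open MeasureTheory Real


/-- First partial derivative `∂₁` of a function on `ℝ²`. -/
def pd1 (f : ℝ × ℝ → ℝ) : ℝ × ℝ → ℝ := fun p => deriv (fun s => f (s, p.2)) p.1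

/-- Second partial derivative `∂₂` of a function on `ℝ²`. -/
def pd2 (f : ℝ × ℝ → ℝ) : ℝ × ℝ → ℝ := fun p => deriv (fun s => f (p.1, s)) p.2

/-- The open unit square `(0,1)² ⊂ ℝ²`. -/
def usq : Set (ℝ × ℝ) := Set.Ioo (0 : ℝ) 1 ×ˢ Set.Ioo (0 : ℝ) 1

/-- First component of `F_t(x) = e^{−x₁/t} (cos(x₂/t), sin(x₂/t))`. -/
def F1 (t : ℝ) : ℝ × ℝ → ℝ := fun x => Real.exp (-x.1 / t) * Real.cos (x.2 / t)

/-- Second component of `F_t(x) = e^{−x₁/t} (cos(x₂/t), sin(x₂/t))`. -/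
def F2 (t : ℝ) : ℝ × ℝ → ℝ := fun x => Real.exp (-x.1 / t) * Real.sin (x.2 / t)

def G (t c : ℝ) : ℝ × ℝ → ℝ := fun x => Real.exp (-x.1 / t) * Real.cos (x.2 / t + c)

lemma pd2_G (t c : ℝ) : pd2 (G t c) = fun x => t⁻¹ * G t (c + π/2) x := by
  funext p
  have hd : HasDerivAt (fun s : ℝ => Real.cos (s / t + c))
      (-Real.sin (p.2 / t + c) * (1 / t)) p.2 := by
    simpa using (((hasDerivAt_id p.2).div_const t).add_const c).cos
  simp only [pd2, G]
  rw [deriv_const_mul _ hd.differentiableAt, hd.deriv, ← add_assoc,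
    Real.cos_add_pi_div_two]
  ring

lemma pd1_G (t c : ℝ) : pd1 (G t c) = fun x => -t⁻¹ * G t c x := by
  funext p
  have hd : HasDerivAt (fun s : ℝ => Real.exp (-s / t))
      (Real.exp (-p.1 / t) * (-1 / t)) p.1 := by
    simpa [neg_div] using (((hasDerivAt_id p.1).neg.div_const t)).exp
  simp only [pd1, G]
  rw [deriv_mul_const hd.differentiableAt, hd.deriv]
  ring

lemma pd2_const_mul (k : ℝ) (f : ℝ × ℝ → ℝ) :
    pd2 (fun x => k * f x) = fun x => k * pd2 f x := by
  funext p; simp only [pd2, deriv_const_mul_field]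

lemma pd1_const_mul (k : ℝ) (f : ℝ × ℝ → ℝ) :
    pd1 (fun x => k * f x) = fun x => k * pd1 f x := by
  funext p; simp only [pd1, deriv_const_mul_field]

lemma pd2_iter_G (t c : ℝ) (b : ℕ) :
    pd2^[b] (G t c) = fun x => (t⁻¹) ^ b * G t (c + b * (π/2)) x := by
  induction b with
  | zero => simp
  | succ n ih =>
    rw [Function.iterate_succ_apply', ih, pd2_const_mul, pd2_G]
    funext x
    have : c + n * (π/2) + π/2 = c + (n+1 : ℕ) * (π/2) := by push_cast; ring
    rw [this]; ring

lemma pd1_iter_const_mul_G (t c k : ℝ) (a : ℕ) :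
    pd1^[a] (fun x => k * G t c x) = fun x => (-t⁻¹) ^ a * k * G t c x := by
  induction a with
  | zero => simp
  | succ n ih =>
    rw [Function.iterate_succ_apply', ih]
    have : (fun x => (-t⁻¹) ^ n * k * G t c x)
        = fun x => ((-t⁻¹) ^ n * k) * G t c x := by funext x; ring
    rw [this, pd1_const_mul, pd1_G]
    funext x; ring

/-- For `t > 0` and `a, b ∈ ℕ` with `s = a + b`,
`Σ_{i=1,2} ∫_{(0,1)²} |∂₁^a ∂₂^b (F_t)_i|² = t^{−2s} · (t/2)(1 − e^{−2/t})`. -/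
theorem stmt_8 (t : ℝ) (ht : 0 < t) (a b : ℕ) :
    (∫ x in usq, (pd1^[a] (pd2^[b] (F1 t)) x) ^ 2)
      + (∫ x in usq, (pd1^[a] (pd2^[b] (F2 t)) x) ^ 2)
      = (t ^ (2 * (a + b)))⁻¹ * (t / 2 * (1 - Real.exp (-2 / t))) := by
  have ht0 : t ≠ 0 := ne_of_gt ht
  have hF1 : F1 t = G t 0 := by funext x; simp [F1, G]
  have hF2 : F2 t = G t (-(π/2)) := by
    funext x
    simp only [F2, G]
    rw [← sub_eq_add_neg, Real.cos_sub_pi_div_two]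
  have e1 : pd1^[a] (pd2^[b] (F1 t))
      = fun x => (-t⁻¹)^a * ((t⁻¹)^b) * G t (0 + b * (π/2)) x := by
    rw [hF1, pd2_iter_G, pd1_iter_const_mul_G]
  have e2 : pd1^[a] (pd2^[b] (F2 t))
      = fun x => (-t⁻¹)^a * ((t⁻¹)^b) * G t (-(π/2) + b * (π/2)) x := by
    rw [hF2, pd2_iter_G, pd1_iter_const_mul_G]
  -- pointwise sum of squares
  have key : ∀ x : ℝ × ℝ,
      (pd1^[a] (pd2^[b] (F1 t)) x)^2 + (pd1^[a] (pd2^[b] (F2 t)) x)^2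
      = (t ^ (2*(a+b)))⁻¹ * Real.exp (-(2*x.1)/t) := by
    intro x
    rw [e1, e2]
    have h2 : x.2/t + (-(π/2) + (b:ℝ) * (π/2)) = (x.2/t + (0 + b*(π/2))) - π/2 := by ring
    simp only [G]
    rw [h2, Real.cos_sub_pi_div_two]
    have hexp : Real.exp (-x.1/t) ^ 2 = Real.exp (-(2*x.1)/t) := by
      rw [← Real.exp_nat_mul]; ring_nf
    have htrig : Real.cos (x.2/t + (0 + b*(π/2)))^2 + Real.sin (x.2/t + (0 + b*(π/2)))^2 = 1 :=
      Real.cos_sq_add_sin_sq _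
    have hpow : ((-t⁻¹)^a * (t⁻¹)^b)^2 = (t ^ (2*(a+b)))⁻¹ := by
      rw [← inv_pow, mul_pow, ← pow_mul, ← pow_mul, Even.neg_pow ⟨a, by ring⟩, ← pow_add]
      congr 1; ring
    calc ((-t⁻¹)^a * (t⁻¹)^b * (Real.exp (-x.1/t) * Real.cos (x.2/t + (0 + b*(π/2)))))^2
          + ((-t⁻¹)^a * (t⁻¹)^b * (Real.exp (-x.1/t) * Real.sin (x.2/t + (0 + b*(π/2)))))^2
        = ((-t⁻¹)^a * (t⁻¹)^b)^2 * Real.exp (-x.1/t)^2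
            * (Real.cos (x.2/t + (0 + b*(π/2)))^2 + Real.sin (x.2/t + (0 + b*(π/2)))^2) := by ring
      _ = (t ^ (2*(a+b)))⁻¹ * Real.exp (-(2*x.1)/t) := by rw [htrig, hexp, hpow]; ring
  -- integrability
  have hintOn : ∀ f : ℝ × ℝ → ℝ, Continuous f → IntegrableOn f usq := by
    intro f hf
    have hK : IsCompact ((Set.Icc (0:ℝ) 1) ×ˢ (Set.Icc (0:ℝ) 1)) :=
      isCompact_Icc.prod isCompact_Icc
    refine ((hf.continuousOn).integrableOn_compact hK).mono_set ?_
    exact Set.prod_mono Set.Ioo_subset_Icc_self Set.Ioo_subset_Icc_self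
  have hcG : ∀ c k : ℝ, Continuous (fun x : ℝ × ℝ => (k * G t c x) ^ 2) := by
    intro c k; unfold G; fun_prop
  have hc1 : Continuous (fun x : ℝ × ℝ => (pd1^[a] (pd2^[b] (F1 t)) x) ^ 2) := by
    rw [e1]
    simpa [mul_assoc] using hcG (0 + b * (π/2)) ((-t⁻¹)^a * (t⁻¹)^b)
  have hc2 : Continuous (fun x : ℝ × ℝ => (pd1^[a] (pd2^[b] (F2 t)) x) ^ 2) := by
    rw [e2]
    simpa [mul_assoc] using hcG (-(π/2) + b * (π/2)) ((-t⁻¹)^a * (t⁻¹)^b)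
  rw [← integral_add (hintOn _ hc1) (hintOn _ hc2)]
  simp only [key]
  rw [MeasureTheory.integral_const_mul]
  -- split the product integral
  have hprod : (∫ x in usq, Real.exp (-(2*x.1)/t))
      = (∫ x in Set.Ioo (0:ℝ) 1, Real.exp (-(2*x)/t))
        * ∫ _y in Set.Ioo (0:ℝ) 1, (1:ℝ) := by
    rw [usq, Measure.volume_eq_prod, ← setIntegral_prod_mul]
    simp
  have hone : (∫ _y in Set.Ioo (0:ℝ) 1, (1:ℝ)) = 1 := by
    simp
  have hexp1 : (∫ x in Set.Ioo (0:ℝ) 1, Real.exp (-(2*x)/t))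
      = t/2 * (1 - Real.exp (-2/t)) := by
    rw [← integral_Ioc_eq_integral_Ioo, ← intervalIntegral.integral_of_le zero_le_one]
    have hd : ∀ x ∈ Set.uIcc (0:ℝ) 1,
        HasDerivAt (fun y => -(t/2) * Real.exp (-(2*y)/t)) (Real.exp (-(2*x)/t)) x := by
      intro x _
      have h : HasDerivAt (fun y => -(t/2) * Real.exp (-(2*y)/t))
          (-(t/2) * (Real.exp (-(2*x)/t) * (-(2*1)/t))) x :=
        ((((hasDerivAt_id x).const_mul (2:ℝ)).neg.div_const t).exp).const_mul (-(t/2))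
      convert h using 1
      field_simp
    rw [intervalIntegral.integral_eq_sub_of_hasDerivAt hd
      (by apply Continuous.intervalIntegrable; fun_prop)]
    norm_num
    ring
  rw [hprod, hone, hexp1]
  ring

end
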